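/- Let ρ > 0, let S be a real symmetric p×p matrix, and let G be a real symmetric p×p matrix. Let T be the unique real symmetric positive definite p×p matrix satisfying ρ T − T⁻¹ = ρ G − S. Then T minimizes the function h(T̃) = −log det T̃ + tr(S T̃) + (ρ/2) ‖T̃ − G‖_F² over all real symmetric positive definite p×p matrices T̃: for every symmetric positive definite T̃, h(T) ≤ h(T̃). -/

import Mathlib

open Matrix

/-- Frobenius norm of a real matrix. -/
noncomputable def frobNorm {m n : Type*} [Fintype m] [Fintype n]
    (A : Matrix m n ℝ) : ℝ :=
  Real.sqrt (∑ i, ∑ j, (A i j) ^ 2)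

lemma myTraceEq {p : ℕ} {A : Matrix (Fin p) (Fin p) ℝ} (hA : A.IsHermitian) :
    A.trace = ∑ i, hA.eigenvalues i := by
  conv_lhs => rw [hA.spectral_theorem, Unitary.conjStarAlgAut_apply]
  rw [Matrix.trace_mul_cycle]
  have h1 : (star (hA.eigenvectorUnitary : Matrix (Fin p) (Fin p) ℝ)) *
      (hA.eigenvectorUnitary : Matrix (Fin p) (Fin p) ℝ) = 1 := by
    simpa using unitary.coe_star_mul_self hA.eigenvectorUnitary
  rw [h1, Matrix.one_mul]
  simp [Matrix.trace_diagonal]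

lemma myPosDefConj {p : ℕ} {B N : Matrix (Fin p) (Fin p) ℝ} (hB : B.PosDef)
    (hN : IsUnit N) : (Nᴴ * B * N).PosDef := by
  exact hB.conjTranspose_mul_mul_same (Matrix.mulVec_injective_iff_isUnit.mpr hN)

open scoped MatrixOrder in
lemma myLogDet {p : ℕ} {A B : Matrix (Fin p) (Fin p) ℝ} (hA : A.PosDef) (hB : B.PosDef) :
    Real.log B.det ≤ Real.log A.det + (A⁻¹ * B).trace - p := by
  set R := CFC.sqrt A with hRdef
  have hRR : R * R = A := CFC.sqrt_mul_sqrt_self A hA.posSemidef.nonneg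
  have hRh : R.IsHermitian := (CFC.sqrt_nonneg A).posSemidef.1
  have hdetA : 0 < A.det := hA.det_pos
  have hdetR : R.det ≠ 0 := by
    intro h
    rw [← hRR, Matrix.det_mul, h, mul_zero] at hdetA
    exact lt_irrefl 0 hdetA
  have hRu : IsUnit R := (Matrix.isUnit_iff_isUnit_det R).mpr hdetR.isUnit
  have hRiu : IsUnit R⁻¹ := (Matrix.isUnit_nonsing_inv_iff).mpr hRu
  have hRih : (R⁻¹).IsHermitian := hRh.inv
  set D := R⁻¹ * B * R⁻¹ with hDdef
  have hD : D.PosDef := by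
    have := myPosDefConj hB hRiu
    rwa [hRih.eq] at this
  -- determinant of D
  have hdetD : D.det = B.det / A.det := by
    rw [hDdef, Matrix.det_mul, Matrix.det_mul, Matrix.det_nonsing_inv, ← hRR, Matrix.det_mul, Ring.inverse_eq_inv']
    field_simp
  -- trace of D
  have htrD : D.trace = (A⁻¹ * B).trace := by
    rw [hDdef, Matrix.trace_mul_cycle, ← Matrix.mul_inv_rev, hRR]
  -- eigenvalue bound
  have hlog : Real.log D.det ≤ D.trace - p := by
    have hev := hD.eigenvalues_pos
    have hdet : D.det = ∏ i, hD.1.eigenvalues i := by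
      simpa using hD.1.det_eq_prod_eigenvalues
    rw [hdet, Real.log_prod (fun i _ => (hev i).ne'), myTraceEq hD.1]
    have : ∑ i, Real.log (hD.1.eigenvalues i) ≤ ∑ i, (hD.1.eigenvalues i - 1) :=
      Finset.sum_le_sum fun i _ => Real.log_le_sub_one_of_pos (hev i)
    simpa [Finset.sum_sub_distrib] using this
  have hBdet : B.det = D.det * A.det := by
    rw [hdetD]; field_simp
  rw [hBdet, Real.log_mul hD.det_pos.ne' hdetA.ne']
  linarith [hlog, htrD.le, htrD.ge]
  
/-- **Optimality of the ADMM `T`-update**: the unique symmetric positive definite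
solution `T` of `ρT − T⁻¹ = ρG − S` minimizes
`h(T̃) = −log det T̃ + tr(S T̃) + (ρ/2)‖T̃ − G‖_F²` over symmetric positive
definite matrices. -/
theorem admm_T_update_minimizes (p : ℕ) (ρ : ℝ) (hρ : 0 < ρ)
    (S G : Matrix (Fin p) (Fin p) ℝ)
    (hS : S.IsHermitian) (hG : G.IsHermitian)
    (T : Matrix (Fin p) (Fin p) ℝ) (hT : T.PosDef)
    (heq : ρ • T - T⁻¹ = ρ • G - S) :
    ∀ Tt : Matrix (Fin p) (Fin p) ℝ, Tt.PosDef →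
      -Real.log T.det + (S * T).trace + ρ / 2 * frobNorm (T - G) ^ 2 ≤
      -Real.log Tt.det + (S * Tt).trace + ρ / 2 * frobNorm (Tt - G) ^ 2 := by
  intro Tt hTt
  set Δ := Tt - T with hΔdef
  have hTu : IsUnit T.det := hT.det_pos.ne'.isUnit
  -- symmetry of Δ
  have hΔh : Δᴴ = Δ := hTt.1.sub hT.1
  have hΔsym : ∀ i j, Δ i j = Δ j i := by
    intro i j
    conv_lhs => rw [← hΔh]
    simp [Matrix.conjTranspose_apply]
  -- frobNorm squared
  have hfr : ∀ X : Matrix (Fin p) (Fin p) ℝ, frobNorm X ^ 2 = ∑ i, ∑ j, (X i j) ^ 2 := by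
    intro X
    exact Real.sq_sqrt (by positivity)
  -- log det inequality
  have h1 : Real.log Tt.det ≤ Real.log T.det + (T⁻¹ * Δ).trace := by
    have := myLogDet hT hTt
    have hexp : T⁻¹ * Tt = 1 + T⁻¹ * Δ := by
      rw [hΔdef, Matrix.mul_sub, Matrix.nonsing_inv_mul T hTu]
      abel
    rw [hexp, Matrix.trace_add, Matrix.trace_one] at this
    simp only [Finset.card_univ, Fintype.card_fin] at this
    linarith
  -- stationarity
  have hz : S - T⁻¹ + ρ • (T - G) = 0 := by
    have h := sub_eq_zero_of_eq heq
    rw [smul_sub]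
    rw [← h]
    abel
  have h2 : (S * Δ).trace - (T⁻¹ * Δ).trace + ρ * ((T - G) * Δ).trace = 0 := by
    have := congrArg (fun M => (M * Δ).trace) hz
    simpa [Matrix.sub_mul, Matrix.add_mul, Matrix.smul_mul, Matrix.trace_sub,
      Matrix.trace_add, Matrix.trace_smul, smul_eq_mul] using this
  -- trace of product as entrywise sum
  have htr : ((T - G) * Δ).trace = ∑ i, ∑ j, (T - G) i j * Δ i j := by
    rw [Matrix.trace]
    simp only [Matrix.diag_apply, Matrix.mul_apply]
    exact Finset.sum_congr rfl fun i _ => Finset.sum_congr rfl fun j _ => by rw [hΔsym j i]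
  -- Frobenius expansion
  have h3 : (∑ i, ∑ j, ((Tt - G) i j) ^ 2) =
      (∑ i, ∑ j, ((T - G) i j) ^ 2) + (∑ i, ∑ j, (Δ i j) ^ 2)
        + 2 * ((T - G) * Δ).trace := by
    have hpt : ∀ i j, (Tt - G) i j = (T - G) i j + Δ i j := by
      intro i j
      simp [hΔdef, Matrix.sub_apply]
    have step : (∑ i, ∑ j, ((Tt - G) i j) ^ 2) =
        ∑ i, ∑ j, (((T - G) i j) ^ 2 + (Δ i j) ^ 2 + 2 * ((T - G) i j * Δ i j)) :=
      Finset.sum_congr rfl fun i _ => Finset.sum_congr rfl fun j _ => by rw [hpt i j]; ring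
    rw [step, htr]
    simp only [Finset.sum_add_distrib, Finset.mul_sum]
  -- trace linearity for S
  have h4 : (S * Tt).trace = (S * T).trace + (S * Δ).trace := by
    rw [hΔdef, Matrix.mul_sub, Matrix.trace_sub]
    ring
  have hF : 0 ≤ ∑ i, ∑ j, (Δ i j) ^ 2 := by positivity
  rw [hfr, hfr]
  have h3' : ρ / 2 * (∑ i, ∑ j, ((Tt - G) i j) ^ 2) =
      ρ / 2 * (∑ i, ∑ j, ((T - G) i j) ^ 2) + ρ / 2 * (∑ i, ∑ j, (Δ i j) ^ 2)
        + ρ * ((T - G) * Δ).trace := by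
    rw [h3]; ring
  nlinarith [mul_nonneg (by linarith : (0:ℝ) ≤ ρ / 2) hF]
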